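/- (TLB construction.) Let Θ ⊆ ℝ be an interval, let g : Θ → ℝ be three times differentiable on Θ, and let b3 be a constant with g'''(θ) ≥ b3 for all θ ∈ Θ. Then for every θt ∈ Θ, the function U(θ|θt) := g(θt) + g'(θt)(θ − θt) + (1/2) g''(θt)(θ − θt)² + (b3/6)(θ − θt)³ is a U-function for g at θt. -/

import Mathlib

/-- TLB construction: if `g` is three times differentiable on the interval `Θ`
with `g'''(θ) ≥ b₃` on `Θ`, then for `θt ∈ Θ` the cubic
`U(θ|θt) = g(θt) + g'(θt)(θ−θt) + (1/2)g''(θt)(θ−θt)² + (b₃/6)(θ−θt)³`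
is a U-function for `g` at `θt`. -/
theorem stmt_8 (Θ : Set ℝ) (hΘ : Θ.OrdConnected) (g g' g'' g''' : ℝ → ℝ) (b₃ : ℝ)
    (hderiv : ∀ θ ∈ Θ, HasDerivWithinAt g (g' θ) Θ θ)
    (hderiv' : ∀ θ ∈ Θ, HasDerivWithinAt g' (g'' θ) Θ θ)
    (hderiv'' : ∀ θ ∈ Θ, HasDerivWithinAt g'' (g''' θ) Θ θ)
    (htlb : ∀ θ ∈ Θ, b₃ ≤ g''' θ)
    (θt : ℝ) (hθt : θt ∈ Θ)
    (U : ℝ → ℝ)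
    (hU : ∀ θ, U θ = g θt + g' θt * (θ - θt) + (1 / 2) * g'' θt * (θ - θt) ^ 2 +
      (b₃ / 6) * (θ - θt) ^ 3) :
    (∀ θ ∈ Θ, θ < θt → g θ ≤ U θ) ∧
      g θt = U θt ∧
      (∀ θ ∈ Θ, θt < θ → U θ ≤ g θ) := by
  have hconv : Convex ℝ Θ := convex_iff_ordConnected.mpr hΘ
  set V : ℝ → ℝ := fun θ => g θt + g' θt * (θ - θt) + (1 / 2) * g'' θt * (θ - θt) ^ 2 +
      (b₃ / 6) * (θ - θt) ^ 3 with hV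
  set h : ℝ → ℝ := fun θ => g θ - V θ with hh
  set p1 : ℝ → ℝ := fun θ => g' θ - (g' θt + g'' θt * (θ - θt) + b₃ / 2 * (θ - θt) ^ 2) with hp1
  set p2 : ℝ → ℝ := fun θ => g'' θ - (g'' θt + b₃ * (θ - θt)) with hp2
  have hsub : ∀ x : ℝ, HasDerivAt (fun y => y - θt) 1 x :=
    fun x => (hasDerivAt_id x).sub_const θt
  -- derivative of h is p1
  have hdh : ∀ θ ∈ Θ, HasDerivWithinAt h (p1 θ) Θ θ := by
    intro θ hθ
    have hV' : HasDerivAt V (g' θt + g'' θt * (θ - θt) + b₃ / 2 * (θ - θt) ^ 2) θ := by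
      have := ((((hsub θ).const_mul (g' θt)).const_add (g θt)).add
        (((hsub θ).pow 2).const_mul ((1:ℝ) / 2 * g'' θt))).add
        (((hsub θ).pow 3).const_mul (b₃ / 6))
      exact this.congr_deriv (by ring)
    exact (hderiv θ hθ).sub hV'.hasDerivWithinAt
  -- derivative of p1 is p2
  have hdp1 : ∀ θ ∈ Θ, HasDerivWithinAt p1 (p2 θ) Θ θ := by
    intro θ hθ
    have hq : HasDerivAt (fun y => g' θt + g'' θt * (y - θt) + b₃ / 2 * (y - θt) ^ 2)
        (g'' θt + b₃ * (θ - θt)) θ := by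
      have := (((hsub θ).const_mul (g'' θt)).const_add (g' θt)).add
        (((hsub θ).pow 2).const_mul (b₃ / 2))
      exact this.congr_deriv (by ring)
    exact (hderiv' θ hθ).sub hq.hasDerivWithinAt
  -- derivative of p2 is g''' - b₃
  have hdp2 : ∀ θ ∈ Θ, HasDerivWithinAt p2 (g''' θ - b₃) Θ θ := by
    intro θ hθ
    have hq : HasDerivAt (fun y => g'' θt + b₃ * (y - θt)) b₃ θ := by
      have := ((hsub θ).const_mul b₃).const_add (g'' θt)
      exact this.congr_deriv (by ring)
    exact (hderiv'' θ hθ).sub hq.hasDerivWithinAt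
  -- p2 is monotone on Θ, vanishes at θt
  have hp2t : p2 θt = 0 := by simp [hp2]
  have mono2 : MonotoneOn p2 Θ :=
    monotoneOn_of_hasDerivWithinAt_nonneg hconv
      (fun θ hθ => (hdp2 θ hθ).continuousWithinAt)
      (fun x hx => ((hdp2 x (interior_subset hx)).mono interior_subset))
      (fun x hx => sub_nonneg.2 (htlb x (interior_subset hx)))
  -- sign of p1 : nonneg on all of Θ
  have hp1t : p1 θt = 0 := by simp [hp1]
  have hp1nonneg : ∀ θ ∈ Θ, 0 ≤ p1 θ := by
    intro θ hθ
    rcases le_total θ θt with hle | hle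
    · -- use antitonicity on Θ ∩ Iic θt
      have hD : Convex ℝ (Θ ∩ Set.Iic θt) := hconv.inter (convex_Iic θt)
      have hiΘ : interior (Θ ∩ Set.Iic θt) ⊆ Θ :=
        interior_subset.trans Set.inter_subset_left
      have anti : AntitoneOn p1 (Θ ∩ Set.Iic θt) :=
        antitoneOn_of_hasDerivWithinAt_nonpos hD
          (fun x hx => ((hdp1 x hx.1).continuousWithinAt).mono Set.inter_subset_left)
          (fun x hx => ((hdp1 x (hiΘ hx)).mono hiΘ))
          (fun x hx => by
            have hx' := interior_subset hx
            have := mono2 hx'.1 hθt hx'.2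
            rw [hp2t] at this
            exact this)
      have := anti ⟨hθ, hle⟩ ⟨hθt, le_refl θt⟩ hle
      rw [hp1t] at this
      exact this
    · have hD : Convex ℝ (Θ ∩ Set.Ici θt) := hconv.inter (convex_Ici θt)
      have hiΘ : interior (Θ ∩ Set.Ici θt) ⊆ Θ :=
        interior_subset.trans Set.inter_subset_left
      have mono : MonotoneOn p1 (Θ ∩ Set.Ici θt) :=
        monotoneOn_of_hasDerivWithinAt_nonneg hD
          (fun x hx => ((hdp1 x hx.1).continuousWithinAt).mono Set.inter_subset_left)
          (fun x hx => ((hdp1 x (hiΘ hx)).mono hiΘ))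
          (fun x hx => by
            have hx' := interior_subset hx
            have := mono2 hθt hx'.1 hx'.2
            rw [hp2t] at this
            exact this)
      have := mono ⟨hθt, le_refl θt⟩ ⟨hθ, hle⟩ hle
      rw [hp1t] at this
      exact this
  -- h is monotone on Θ, vanishes at θt
  have hht : h θt = 0 := by simp [hh, hV]
  have monoh : MonotoneOn h Θ :=
    monotoneOn_of_hasDerivWithinAt_nonneg hconv
      (fun θ hθ => (hdh θ hθ).continuousWithinAt)
      (fun x hx => ((hdh x (interior_subset hx)).mono interior_subset))
      (fun x hx => hp1nonneg x (interior_subset hx))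
  have hUV : ∀ θ, U θ = V θ := fun θ => hU θ
  refine ⟨?_, ?_, ?_⟩
  · intro θ hθ hlt
    have := monoh hθ hθt hlt.le
    rw [hht] at this
    rw [hUV θ]
    have : g θ - V θ ≤ 0 := this
    linarith
  · rw [hUV θt]; simp [hV]
  · intro θ hθ hlt
    have := monoh hθt hθ hlt.le
    rw [hht] at this
    rw [hUV θ]
    have : 0 ≤ g θ - V θ := this
    linarith
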